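/- A (z₀,z₁)-∃∀-type existential composition lemma: if φ₁(z₀,z₁) is equivalent to a disjunction of ∃∀-formulas whose free variables z₀,z₁ are the endpoints of the quantified increasing tuple, and φ₂(z₁,z₂) likewise, then ∃z₁ (z₀ < z₁ < z₂ ∧ φ₁(z₀,z₁) ∧ φ₂(z₁,z₂)) is equivalent to a disjunction of such formulas in (z₀,z₂). -/

import Mathlib

/-- Syntax of the temporal logic TL(U,S) with strict Until and strict Since. -/
inductive TL (σ : Type) : Type
  | tt : TL σ
  | atom : σ → TL σ
  | neg : TL σ → TL σ
  | or : TL σ → TL σ → TL σ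
  | and : TL σ → TL σ → TL σ
  | until_ : TL σ → TL σ → TL σ
  | since : TL σ → TL σ → TL σ

/-- Semantics of TL(U,S) over a chain: a linear order `T` with interpretation `I`. -/
def TL.sat {σ T : Type} [LinearOrder T] (I : σ → Set T) : TL σ → T → Prop
  | .tt, _ => True
  | .atom p, t => t ∈ I p
  | .neg F, t => ¬ TL.sat I F t
  | .or F G, t => TL.sat I F t ∨ TL.sat I G t
  | .and F G, t => TL.sat I F t ∧ TL.sat I G t
  | .until_ F G, t => ∃ t', t < t' ∧ TL.sat I G t' ∧ ∀ s, t < s → s < t' → TL.sat I F s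
  | .since F G, t => ∃ t', t' < t ∧ TL.sat I G t' ∧ ∀ s, t' < s → s < t → TL.sat I F s

/-- K⁻(F) := ¬((¬F) S True). -/
def TL.kminus {σ : Type} (F : TL σ) : TL σ := .neg (.since (.neg F) .tt)

/-- K⁺(F) := ¬((¬F) U True). -/
def TL.kplus {σ : Type} (F : TL σ) : TL σ := .neg (.until_ (.neg F) .tt)

/-- G F := ¬(True U ¬F): F holds everywhere strictly after the current point. -/
def TL.G {σ : Type} (F : TL σ) : TL σ := .neg (.until_ .tt (.neg F))

/-- G⁻ F := ¬(True S ¬F): F holds everywhere strictly before the current point. -/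
def TL.Gm {σ : Type} (F : TL σ) : TL σ := .neg (.since .tt (.neg F))

/-- Syntax of FOMLO: first-order monadic logic of order (variables are natural numbers). -/
inductive FO (σ : Type) : Type
  | lt : ℕ → ℕ → FO σ
  | eq : ℕ → ℕ → FO σ
  | atom : σ → ℕ → FO σ
  | neg : FO σ → FO σ
  | or : FO σ → FO σ → FO σ
  | and : FO σ → FO σ → FO σ
  | ex : ℕ → FO σ → FO σ
  | all : ℕ → FO σ → FO σ

/-- Semantics of FOMLO over a chain, with a valuation of the variables. -/
def FO.sat {σ T : Type} [LinearOrder T] (I : σ → Set T) : FO σ → (ℕ → T) → Prop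
  | .lt i j, v => v i < v j
  | .eq i j, v => v i = v j
  | .atom p i, v => v i ∈ I p
  | .neg φ, v => ¬ FO.sat I φ v
  | .or φ ψ, v => FO.sat I φ v ∨ FO.sat I ψ v
  | .and φ ψ, v => FO.sat I φ v ∧ FO.sat I ψ v
  | .ex i φ, v => ∃ t, FO.sat I φ (Function.update v i t)
  | .all i φ, v => ∀ t, FO.sat I φ (Function.update v i t)

/-- Free variables of a FOMLO formula. -/
def FO.freeVars {σ : Type} : FO σ → Set ℕ
  | .lt i j => {i, j}
  | .eq i j => {i, j}
  | .atom _ i => {i}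
  | .neg φ => φ.freeVars
  | .or φ ψ => φ.freeVars ∪ ψ.freeVars
  | .and φ ψ => φ.freeVars ∪ ψ.freeVars
  | .ex i φ => φ.freeVars \ {i}
  | .all i φ => φ.freeVars \ {i}

/-- Quantifier-free one-variable (propositional) formulas over the monadic predicates. -/
inductive QF (σ : Type) : Type
  | tt : QF σ
  | atom : σ → QF σ
  | neg : QF σ → QF σ
  | or : QF σ → QF σ → QF σ
  | and : QF σ → QF σ → QF σ

def QF.sat {σ T : Type} (I : σ → Set T) : QF σ → T → Prop
  | .tt, _ => True
  | .atom p, t => t ∈ I p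
  | .neg φ, t => ¬ QF.sat I φ t
  | .or φ ψ, t => QF.sat I φ t ∨ QF.sat I ψ t
  | .and φ ψ, t => QF.sat I φ t ∧ QF.sat I ψ t

/-- The propositional temporal formula corresponding to a quantifier-free formula. -/
def QF.toTL {σ : Type} : QF σ → TL σ
  | .tt => .tt
  | .atom p => .atom p
  | .neg φ => .neg φ.toTL
  | .or φ ψ => .or φ.toTL ψ.toTL
  | .and φ ψ => .and φ.toTL ψ.toTL

/-- An ∃∀-formula over the monadic signature `σ` with free variables `z₀,…,z_m`:
`∃ x_n … x₀, (⋀_k z_k = x_{idx k}) ∧ x₀ < … < x_n ∧ ⋀_j α_j(x_j) ∧`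
each `βmid j` holds throughout the open interval `(x_j, x_{j+1})`,
`βhi` holds everywhere after `x_n`, and `βlo` holds everywhere before `x₀`. -/
structure EAForm (σ : Type) (m : ℕ) where
  n : ℕ
  idx : Fin (m + 1) → Fin (n + 1)
  α : Fin (n + 1) → QF σ
  βmid : Fin n → QF σ
  βlo : QF σ
  βhi : QF σ

/-- Semantics of ∃∀-formulas. -/
def EAForm.sat {σ : Type} {m : ℕ} {T : Type} [LinearOrder T] (e : EAForm σ m)
    (I : σ → Set T) (z : Fin (m + 1) → T) : Prop :=
  ∃ x : Fin (e.n + 1) → T, StrictMono x ∧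
    (∀ k, z k = x (e.idx k)) ∧
    (∀ j, (e.α j).sat I (x j)) ∧
    (∀ j : Fin e.n, ∀ y, x j.castSucc < y → y < x j.succ → (e.βmid j).sat I y) ∧
    (∀ y, y < x 0 → e.βlo.sat I y) ∧
    (∀ y, x (Fin.last e.n) < y → e.βhi.sat I y)

/-- Satisfaction of a disjunction of ∃∀-formulas. -/
def EADisj {σ : Type} {m : ℕ} {T : Type} [LinearOrder T] (L : List (EAForm σ m))
    (I : σ → Set T) (z : Fin (m + 1) → T) : Prop :=
  ∃ f ∈ L, f.sat I z

/-- A linear order is Dedekind complete if every nonempty bounded-above subset has a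
least upper bound and every nonempty bounded-below subset has a greatest lower bound. -/
def DedekindComplete (T : Type) [LinearOrder T] : Prop :=
  (∀ S : Set T, S.Nonempty → BddAbove S → ∃ a, IsLUB S a) ∧
  (∀ S : Set T, S.Nonempty → BddBelow S → ∃ a, IsGLB S a)

/-- The canonical TL(U,S)-expansion of a chain: one unary predicate for each
TL(U,S)-formula `A`, interpreted as the set of points satisfying `A`. -/
def canonExp {σ T : Type} [LinearOrder T] (I : σ → Set T) : TL σ → Set T :=
  fun A => {t | A.sat I t}

/-- `[α₀,β₁,α₁,…,β_n,α_n](z₀,z₁)` : there are `z₀ = x₀ < x₁ < … < x_n = z₁` with each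
`a j` holding at `x_j` and `b j` holding throughout `(x_j, x_{j+1})`
(`b j` stands for `β_{j+1}`). -/
def chainSat {σ T : Type} [LinearOrder T] (I : σ → Set T) (n : ℕ) (a b : ℕ → QF σ)
    (z₀ z₁ : T) : Prop :=
  ∃ x : Fin (n + 1) → T, x 0 = z₀ ∧ x (Fin.last n) = z₁ ∧ StrictMono x ∧
    (∀ j : Fin (n + 1), (a j.val).sat I (x j)) ∧
    (∀ j : Fin n, ∀ y, x j.castSucc < y → y < x j.succ → (b j.val).sat I y)

/-- `nestU [(B₁,A₁),…,(B_k,A_k)] tail = B₁ U (A₁ ∧ (B₂ U (A₂ ∧ … (B_k U (A_k ∧ tail))…)))`. -/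
def nestU {σ : Type} : List (TL σ × TL σ) → TL σ → TL σ
  | [], tail => tail
  | (B, A) :: rest, tail => B.until_ (A.and (nestU rest tail))

/-- `nestS [(B₁,A₁),…,(B_k,A_k)] tail = B₁ S (A₁ ∧ (B₂ S (A₂ ∧ … (B_k S (A_k ∧ tail))…)))`. -/
def nestS {σ : Type} : List (TL σ × TL σ) → TL σ → TL σ
  | [], tail => tail
  | (B, A) :: rest, tail => B.since (A.and (nestS rest tail))

/-- `α_i` as a temporal formula, extended by `True` out of range. -/
def EAForm.aExt {σ : Type} {m : ℕ} (e : EAForm σ m) (i : ℕ) : TL σ :=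
  if h : i < e.n + 1 then (e.α ⟨i, h⟩).toTL else .tt

/-- `β_{i+1}` (interval `(x_i, x_{i+1})`) as a temporal formula, `True` out of range. -/
def EAForm.bExt {σ : Type} {m : ℕ} (e : EAForm σ m) (i : ℕ) : TL σ :=
  if h : i < e.n then (e.βmid ⟨i, h⟩).toTL else .tt

/-- The future part `A_k ∧ (B_{k+1} U (A_{k+1} ∧ … (A_n ∧ G B_{n+1})…))` of the
translation of a one-free-variable ∃∀-formula (with `z₀ = x_k`). -/
def EAForm.futureTL {σ : Type} (e : EAForm σ 0) : TL σ :=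
  (e.aExt (e.idx 0).val).and
    (nestU (List.ofFn (fun j : Fin (e.n - (e.idx 0).val) =>
        (e.bExt ((e.idx 0).val + j.val), e.aExt ((e.idx 0).val + j.val + 1))))
      e.βhi.toTL.G)

/-- The past part `A_k ∧ (B_k S (A_{k-1} ∧ … (A₀ ∧ G⁻ B₀)…))` of the translation. -/
def EAForm.pastTL {σ : Type} (e : EAForm σ 0) : TL σ :=
  (e.aExt (e.idx 0).val).and
    (nestS (List.ofFn (fun j : Fin (e.idx 0).val =>
        (e.bExt ((e.idx 0).val - 1 - j.val), e.aExt ((e.idx 0).val - 1 - j.val))))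
      e.βlo.toTL.Gm)

/-- `Fseq a b n j` is the temporal formula `F_{n-j}` where `F_n := α_n` and
`F_{i-1} := α_{i-1} ∧ (β_i U F_i)`; here `b i` stands for `β_{i+1}`. -/
def Fseq {σ : Type} (a b : ℕ → QF σ) (n : ℕ) : ℕ → TL σ
  | 0 => (a n).toTL
  | j + 1 => ((a (n - j - 1)).toTL).and (((b (n - j - 1)).toTL).until_ (Fseq a b n j))

/-- Syntax of the temporal logic TL(U,K⁻) with strict Until and the modality K⁻. -/
inductive TLK (σ : Type) : Type
  | tt : TLK σ
  | atom : σ → TLK σ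
  | neg : TLK σ → TLK σ
  | or : TLK σ → TLK σ → TLK σ
  | and : TLK σ → TLK σ → TLK σ
  | until_ : TLK σ → TLK σ → TLK σ
  | kminus : TLK σ → TLK σ

/-- Semantics of TL(U,K⁻): `K⁻(F)` holds at `t` iff `t = sup{t' < t : F(t')}`. -/
def TLK.sat {σ T : Type} [LinearOrder T] (I : σ → Set T) : TLK σ → T → Prop
  | .tt, _ => True
  | .atom p, t => t ∈ I p
  | .neg F, t => ¬ TLK.sat I F t
  | .or F G, t => TLK.sat I F t ∨ TLK.sat I G t
  | .and F G, t => TLK.sat I F t ∧ TLK.sat I G t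
  | .until_ F G, t => ∃ t', t < t' ∧ TLK.sat I G t' ∧ ∀ s, t < s → s < t' → TLK.sat I F s
  | .kminus F, t => IsLUB {t' | t' < t ∧ TLK.sat I F t'} t

/-- Syntactically future TL(U,K⁻) formulas: Boolean combinations of atoms and
Until-formulas. -/
inductive SynFuture {σ : Type} : TLK σ → Prop
  | tt : SynFuture .tt
  | atom (p : σ) : SynFuture (.atom p)
  | until_ (F G : TLK σ) : SynFuture (.until_ F G)
  | neg {F} : SynFuture F → SynFuture (.neg F)
  | or {F G} : SynFuture F → SynFuture G → SynFuture (.or F G)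
  | and {F G} : SynFuture F → SynFuture G → SynFuture (.and F G)

/-- The subchain of a chain restricted to `[t₀,∞)`: the interpretation induced on the
subtype `{t // t₀ ≤ t}`. -/
def restrictI {σ T : Type} (I : σ → Set T) [LinearOrder T] (t₀ : T) :
    σ → Set {t : T // t₀ ≤ t} :=
  fun p => {s | s.val ∈ I p}

/-- A (z₀,z₁)-∃∀ formula: either `z₀ > z₁`, or `z₀ = z₁`, or a formula
`[α₀,β₁,…,β_n,α_n](z₀,z₁)`. -/
inductive IntervalEA (σ : Type) : Type
  | gt : IntervalEA σ
  | eq : IntervalEA σ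
  | chain (n : ℕ) (a b : ℕ → QF σ) : IntervalEA σ

def IntervalEA.sat {σ T : Type} [LinearOrder T] (I : σ → Set T) :
    IntervalEA σ → T → T → Prop
  | .gt, z₀, z₁ => z₁ < z₀
  | .eq, z₀, z₁ => z₀ = z₁
  | .chain n a b, z₀, z₁ => chainSat I n a b z₀ z₁

lemma chainSat_zero_eq {σ T : Type} [LinearOrder T] {I : σ → Set T} {a b : ℕ → QF σ}
    {z₀ z₁ : T} (h : chainSat I 0 a b z₀ z₁) : z₀ = z₁ := by
  obtain ⟨x, h0, hl, _⟩ := h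
  rw [← h0, ← hl]; rfl

lemma chainSat_lt {σ T : Type} [LinearOrder T] {I : σ → Set T} {n : ℕ} (hn : 0 < n)
    {a b : ℕ → QF σ} {z₀ z₁ : T} (h : chainSat I n a b z₀ z₁) : z₀ < z₁ := by
  obtain ⟨x, h0, hl, hm, _⟩ := h
  rw [← h0, ← hl]
  exact hm (by simp only [Fin.lt_def, Fin.last, Fin.val_zero]; omega)

/-- The composition of two (z₀,z₁)-∃∀ formulas. -/
def compEA {σ : Type} : IntervalEA σ → IntervalEA σ → List (IntervalEA σ)
  | .chain n₁ a₁ b₁, .chain n₂ a₂ b₂ =>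
    if n₁ = 0 ∨ n₂ = 0 then [] else
      [.chain (n₁ + n₂)
        (fun j => if j < n₁ then a₁ j else if j = n₁ then (a₁ n₁).and (a₂ 0) else a₂ (j - n₁))
        (fun j => if j < n₁ then b₁ j else b₂ (j - n₁))]
  | _, _ => []

lemma chain_comp {σ T : Type} [LinearOrder T] (I : σ → Set T)
    (n₁ n₂ : ℕ) (h₁ : 0 < n₁) (h₂ : 0 < n₂) (a₁ b₁ a₂ b₂ : ℕ → QF σ) (z₀ z₂ : T) :
    (∃ z₁, chainSat I n₁ a₁ b₁ z₀ z₁ ∧ chainSat I n₂ a₂ b₂ z₁ z₂) ↔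
      chainSat I (n₁ + n₂)
        (fun j => if j < n₁ then a₁ j else if j = n₁ then (a₁ n₁).and (a₂ 0) else a₂ (j - n₁))
        (fun j => if j < n₁ then b₁ j else b₂ (j - n₁)) z₀ z₂ := by
  constructor
  · rintro ⟨z₁, ⟨x, hx0, hxl, hxm, hxa, hxb⟩, ⟨y, hy0, hyl, hym, hya, hyb⟩⟩
    set w : Fin (n₁ + n₂ + 1) → T := fun j =>
      if h : j.val ≤ n₁ then x ⟨j.val, by omega⟩ else y ⟨j.val - n₁, by omega⟩ with hw
    have hxy : x ⟨n₁, by omega⟩ = y ⟨0, by omega⟩ := by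
      have h1 : x ⟨n₁, by omega⟩ = x (Fin.last n₁) := by congr 1
      have h2 : y ⟨0, by omega⟩ = y 0 := by congr 1
      rw [h1, h2, hxl, hy0]
    have hwlo : ∀ (j : Fin (n₁ + n₂ + 1)) (h : j.val ≤ n₁), w j = x ⟨j.val, by omega⟩ := by
      intro j h; simp only [hw, dif_pos h]
    have hwhi : ∀ (j : Fin (n₁ + n₂ + 1)) (h : n₁ ≤ j.val), w j = y ⟨j.val - n₁, by omega⟩ := by
      intro j h
      rcases eq_or_lt_of_le h with h' | h'
      · rw [hwlo j (le_of_eq h'.symm)]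
        have : (⟨j.val, by omega⟩ : Fin (n₁ + 1)) = ⟨n₁, by omega⟩ := by
          apply Fin.ext; simp [← h']
        rw [this, hxy]; congr 1; apply Fin.ext; simp; omega
      · simp only [hw, dif_neg (by omega : ¬ j.val ≤ n₁)]
    refine ⟨w, ?_, ?_, ?_, ?_, ?_⟩
    · rw [hwlo 0 (by simp), ← hx0]; congr 1
    · rw [hwhi (Fin.last _) (by simp [Fin.last]), ← hyl]
      congr 1; apply Fin.ext; simp [Fin.last]
    · intro j k hjk
      have hjk' : j.val < k.val := hjk
      by_cases hj : j.val ≤ n₁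
      · by_cases hk : k.val ≤ n₁
        · rw [hwlo j hj, hwlo k hk]
          exact hxm (Fin.mk_lt_mk.2 (by omega))
        · rw [hwlo j hj, hwhi k (by omega)]
          calc x ⟨j.val, by omega⟩ ≤ x ⟨n₁, by omega⟩ :=
                hxm.monotone (Fin.mk_le_mk.2 (by omega))
            _ = y ⟨0, by omega⟩ := hxy
            _ < y ⟨k.val - n₁, by omega⟩ := hym (Fin.mk_lt_mk.2 (by omega))
      · rw [hwhi j (by omega), hwhi k (by omega)]
        exact hym (Fin.mk_lt_mk.2 (by omega))
    · intro j
      by_cases hj : j.val < n₁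
      · rw [hwlo j (by omega)]
        simp only [if_pos hj]
        exact hxa ⟨j.val, by omega⟩
      · by_cases hj' : j.val = n₁
        · have ej : (⟨j.val, by omega⟩ : Fin (n₁ + 1)) = ⟨n₁, by omega⟩ := Fin.ext hj'
          rw [hwlo j (by omega), ej]
          have hform : (fun j => if j < n₁ then a₁ j else if j = n₁ then
              (a₁ n₁).and (a₂ 0) else a₂ (j - n₁)) j.val = (a₁ n₁).and (a₂ 0) := by
            simp [hj']
          rw [hform]
          simp only [QF.sat]
          refine ⟨by simpa using hxa ⟨n₁, by omega⟩, ?_⟩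
          rw [hxy]; simpa using hya ⟨0, by omega⟩
        · rw [hwhi j (by omega)]
          simp only [if_neg (by omega : ¬ j.val < n₁), if_neg hj']
          exact hya ⟨j.val - n₁, by omega⟩
    · intro j u hu1 hu2
      by_cases hj : j.val < n₁
      · simp only [if_pos hj]
        have e1 : w j.castSucc = x ((⟨j.val, by omega⟩ : Fin n₁).castSucc) := by
          rw [hwlo j.castSucc (by simp; omega)]; congr 1
        have e2 : w j.succ = x ((⟨j.val, by omega⟩ : Fin n₁).succ) := by
          rw [hwlo j.succ (by simp; omega)]; congr 1
        exact hxb ⟨j.val, by omega⟩ u (e1 ▸ hu1) (e2 ▸ hu2)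
      · simp only [if_neg hj]
        have e1 : w j.castSucc = y ((⟨j.val - n₁, by omega⟩ : Fin n₂).castSucc) := by
          rw [hwhi j.castSucc (by simp; omega)]; congr 1
        have e2 : w j.succ = y ((⟨j.val - n₁, by omega⟩ : Fin n₂).succ) := by
          rw [hwhi j.succ (by simp; omega)]; congr 1; apply Fin.ext; simp; omega
        exact hyb ⟨j.val - n₁, by omega⟩ u (e1 ▸ hu1) (e2 ▸ hu2)
  · rintro ⟨w, hw0, hwl, hwm, hwa, hwb⟩
    refine ⟨w ⟨n₁, by omega⟩, ⟨fun j => w ⟨j.val, by omega⟩, ?_, ?_, ?_, ?_, ?_⟩,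
      ⟨fun j => w ⟨n₁ + j.val, by omega⟩, ?_, ?_, ?_, ?_, ?_⟩⟩
    · rw [← hw0]; congr 1
    · rfl
    · intro j k hjk; exact hwm (Fin.mk_lt_mk.2 hjk)
    · intro j
      have := hwa ⟨j.val, by omega⟩
      by_cases hj : j.val < n₁
      · simpa [if_pos hj] using this
      · have hj' : j.val = n₁ := by omega
        simp only [if_neg (by omega : ¬ j.val < n₁), if_pos hj'] at this
        rw [hj']
        exact this.1
    · intro j u hu1 hu2
      have e1 : ((⟨j.val, by omega⟩ : Fin (n₁ + n₂)).castSucc : Fin (n₁ + n₂ + 1)) =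
          ⟨j.castSucc.val, by omega⟩ := by apply Fin.ext; simp
      have e2 : ((⟨j.val, by omega⟩ : Fin (n₁ + n₂)).succ : Fin (n₁ + n₂ + 1)) =
          ⟨j.succ.val, by omega⟩ := by apply Fin.ext; simp
      have := hwb ⟨j.val, by omega⟩ u (by rw [e1]; exact hu1) (by rw [e2]; exact hu2)
      simpa [if_pos j.isLt] using this
    · rfl
    · rw [← hwl]; rfl
    · intro j k hjk
      exact hwm (Fin.mk_lt_mk.2 (by have := Fin.lt_def.mp hjk; omega))
    · intro j
      have := hwa ⟨n₁ + j.val, by omega⟩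
      by_cases hj : j.val = 0
      · simp only [if_neg (by omega : ¬ n₁ + j.val < n₁), if_pos (by omega : n₁ + j.val = n₁)]
          at this
        have h0 : (⟨n₁ + j.val, by omega⟩ : Fin (n₁ + n₂ + 1)) = ⟨n₁, by omega⟩ := by
          apply Fin.ext; simp [hj]
        rw [h0] at this
        simpa [hj] using this.2
      · simp only [if_neg (by omega : ¬ n₁ + j.val < n₁), if_neg (by omega : ¬ n₁ + j.val = n₁)]
          at this
        simpa using this
    · intro j u hu1 hu2
      have e1 : ((⟨n₁ + j.val, by omega⟩ : Fin (n₁ + n₂)).castSucc : Fin (n₁ + n₂ + 1)) =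
          ⟨n₁ + j.castSucc.val, by omega⟩ := by apply Fin.ext; simp
      have e2 : ((⟨n₁ + j.val, by omega⟩ : Fin (n₁ + n₂)).succ : Fin (n₁ + n₂ + 1)) =
          ⟨n₁ + j.succ.val, by omega⟩ := by apply Fin.ext; simp; omega
      have := hwb ⟨n₁ + j.val, by omega⟩ u (by rw [e1]; exact hu1) (by rw [e2]; exact hu2)
      simpa [if_neg (by omega : ¬ n₁ + j.val < n₁)] using this

lemma compEA_correct {σ T : Type} [LinearOrder T] (I : σ → Set T) (f g : IntervalEA σ)
    (z₀ z₂ : T) :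
    (∃ z₁, z₀ < z₁ ∧ z₁ < z₂ ∧ f.sat I z₀ z₁ ∧ g.sat I z₁ z₂) ↔
      ∃ h ∈ compEA f g, h.sat I z₀ z₂ := by
  match f, g with
  | .gt, g =>
    simp only [compEA, IntervalEA.sat, List.not_mem_nil, false_and, exists_false, iff_false]
    rintro ⟨z₁, h1, _, h3, _⟩; exact absurd h3 (not_lt.2 h1.le)
  | .eq, g =>
    simp only [compEA, IntervalEA.sat, List.not_mem_nil, false_and, exists_false, iff_false]
    rintro ⟨z₁, h1, _, h3, _⟩; exact absurd h3 h1.ne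
  | .chain n₁ a₁ b₁, .gt =>
    simp only [compEA, IntervalEA.sat, List.not_mem_nil, false_and, exists_false, iff_false]
    rintro ⟨z₁, _, h2, _, h4⟩; exact absurd h4 (not_lt.2 h2.le)
  | .chain n₁ a₁ b₁, .eq =>
    simp only [compEA, IntervalEA.sat, List.not_mem_nil, false_and, exists_false, iff_false]
    rintro ⟨z₁, _, h2, _, h4⟩; exact absurd h4 h2.ne
  | .chain n₁ a₁ b₁, .chain n₂ a₂ b₂ =>
    by_cases h0 : n₁ = 0 ∨ n₂ = 0
    · simp only [compEA, if_pos h0, IntervalEA.sat, List.not_mem_nil, false_and,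
        exists_false, iff_false]
      rintro ⟨z₁, h1, h2, h3, h4⟩
      rcases h0 with h0 | h0
      · subst h0; exact absurd (chainSat_zero_eq h3) h1.ne
      · subst h0; exact absurd (chainSat_zero_eq h4) h2.ne
    · push_neg at h0
      have h₁ : 0 < n₁ := Nat.pos_of_ne_zero h0.1
      have h₂ : 0 < n₂ := Nat.pos_of_ne_zero h0.2
      simp only [compEA]
      rw [if_neg (by omega : ¬ (n₁ = 0 ∨ n₂ = 0))]
      simp only [List.mem_singleton, exists_eq_left, IntervalEA.sat]
      rw [← chain_comp I n₁ n₂ h₁ h₂ a₁ b₁ a₂ b₂ z₀ z₂]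
      constructor
      · rintro ⟨z₁, _, _, h3, h4⟩; exact ⟨z₁, h3, h4⟩
      · rintro ⟨z₁, h3, h4⟩
        exact ⟨z₁, chainSat_lt h₁ h3, chainSat_lt h₂ h4, h3, h4⟩

/-- existential composition of (z₀,z₁)-D∃∀ formulas: if φ₁(z₀,z₁) and
φ₂(z₁,z₂) are disjunctions of (z₀,z₁)-∃∀ formulas, then
∃z₁ (z₀ < z₁ < z₂ ∧ φ₁(z₀,z₁) ∧ φ₂(z₁,z₂)) is equivalent over all chains to such a
disjunction in (z₀,z₂). -/
theorem interval_ea_composition (σ : Type) (L₁ L₂ : List (IntervalEA σ)) :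
    ∃ L : List (IntervalEA σ),
      ∀ (T : Type) [LinearOrder T] (I : σ → Set T) (z₀ z₂ : T),
        (∃ z₁, z₀ < z₁ ∧ z₁ < z₂ ∧
            (∃ f ∈ L₁, f.sat I z₀ z₁) ∧ (∃ f ∈ L₂, f.sat I z₁ z₂)) ↔
          ∃ f ∈ L, f.sat I z₀ z₂ := by
  refine ⟨L₁.flatMap fun f => L₂.flatMap fun g => compEA f g, ?_⟩
  intro T _ I z₀ z₂
  constructor
  · rintro ⟨z₁, h1, h2, ⟨f, hf, hfs⟩, ⟨g, hg, hgs⟩⟩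
    obtain ⟨h, hh, hhs⟩ := (compEA_correct I f g z₀ z₂).1 ⟨z₁, h1, h2, hfs, hgs⟩
    exact ⟨h, by simp only [List.mem_flatMap]; exact ⟨f, hf, g, hg, hh⟩, hhs⟩
  · rintro ⟨h, hh, hhs⟩
    simp only [List.mem_flatMap] at hh
    obtain ⟨f, hf, g, hg, hh⟩ := hh
    obtain ⟨z₁, h1, h2, hfs, hgs⟩ := (compEA_correct I f g z₀ z₂).2 ⟨h, hh, hhs⟩
    exact ⟨z₁, h1, h2, ⟨f, hf, hfs⟩, ⟨g, hg, hgs⟩⟩
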